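/- Every Artinian commutative ring has enough homogeneous polynomials. -/

import Mathlib

/-- A commutative ring `R` has enough homogeneous polynomials if for every `n ≥ 1`
and every finite set `S ⊆ R^n` whose tuples have coprime entries, there is a
nonconstant homogeneous polynomial taking unit values on `S`. -/
def HasEnoughHomogeneousPolynomials (R : Type*) [CommRing R] : Prop :=
  ∀ n : ℕ, 1 ≤ n → ∀ S : Finset (Fin n → R),
    (∀ Q ∈ S, Ideal.span (Set.range Q) = ⊤) →
    ∃ (f : MvPolynomial (Fin n) R) (d : ℕ), 1 ≤ d ∧ f.IsHomogeneous d ∧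
      ∀ Q ∈ S, IsUnit (MvPolynomial.eval Q f)

open MvPolynomial

lemma eval_smul_homog {κ : Type*} [CommRing κ] {n : ℕ} {f : MvPolynomial (Fin n) κ}
    {d : ℕ} (hf : f.IsHomogeneous d) (a : κ) (w : Fin n → κ) :
    MvPolynomial.eval (a • w) f = a ^ d * MvPolynomial.eval w f := by
  rw [eval_eq, eval_eq, Finset.mul_sum]
  refine Finset.sum_congr rfl fun m hm => ?_
  have hdeg : ∑ i ∈ m.support, m i = d := by
    have := hf (mem_support_iff.mp hm)
    rw [← this]
    simp [Finsupp.weight_apply, Finsupp.sum]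
  have : ∏ i ∈ m.support, (a • w) i ^ m i
      = a ^ d * ∏ i ∈ m.support, w i ^ m i := by
    rw [← hdeg, ← Finset.prod_pow_eq_pow_sum]
    rw [← Finset.prod_mul_distrib]
    refine Finset.prod_congr rfl fun i _ => ?_
    simp [mul_pow]
  rw [this]; ring

lemma exists_functional {κ : Type*} [Field κ] {n : ℕ} {w v : Fin n → κ}
    (h : v ∉ Submodule.span κ {w}) :
    ∃ c : (Fin n → κ) →ₗ[κ] κ, c w = 0 ∧ c v ≠ 0 := by
  set W := Submodule.span κ {w}
  have hv : W.mkQ v ≠ 0 := by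
    simpa [Submodule.Quotient.mk_eq_zero] using h
  obtain ⟨φ, hφ⟩ : ∃ φ : Module.Dual κ ((Fin n → κ) ⧸ W), φ (W.mkQ v) ≠ 0 := by
    by_contra hcon
    push_neg at hcon
    exact hv ((Module.forall_dual_apply_eq_zero_iff κ _).mp hcon)
  refine ⟨φ.comp W.mkQ, ?_, hφ⟩
  have hw : W.mkQ w = 0 := by
    simp [Submodule.Quotient.mk_eq_zero, W, Submodule.mem_span_singleton_self]
  simp [hw]

noncomputable def linForm {κ : Type*} [CommRing κ] {n : ℕ} (c : (Fin n → κ) →ₗ[κ] κ) :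
    MvPolynomial (Fin n) κ := ∑ i, C (c fun j => if i = j then 1 else 0) * X i

lemma linForm_homog {κ : Type*} [CommRing κ] {n : ℕ} (c : (Fin n → κ) →ₗ[κ] κ) :
    (linForm c).IsHomogeneous 1 :=
  IsHomogeneous.sum _ _ _ fun i _ => isHomogeneous_C_mul_X _ _

lemma eval_linForm {κ : Type*} [CommRing κ] {n : ℕ} (c : (Fin n → κ) →ₗ[κ] κ)
    (u : Fin n → κ) : MvPolynomial.eval u (linForm c) = c u := by
  rw [LinearMap.pi_apply_eq_sum_univ c u]
  simp only [linForm, map_sum, eval_mul, eval_C, eval_X, smul_eq_mul]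
  exact Finset.sum_congr rfl fun x _ => mul_comm _ _

lemma field_step {κ : Type*} [Field κ] {n : ℕ} (hn : 1 ≤ n) (T : Finset (Fin n → κ)) :
    (∀ v ∈ T, v ≠ 0) →
    ∃ (f : MvPolynomial (Fin n) κ) (d : ℕ), 1 ≤ d ∧ f.IsHomogeneous d ∧
      ∀ v ∈ T, MvPolynomial.eval v f ≠ 0 := by
  classical
  induction T using Finset.induction_on with
  | empty =>
    intro _
    exact ⟨X ⟨0, hn⟩, 1, le_refl 1, isHomogeneous_X _ _, by simp⟩
  | @insert v T hvT ih =>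
    intro hnz
    obtain ⟨f, d, hd, hf, hval⟩ := ih (fun w hw => hnz w (Finset.mem_insert_of_mem hw))
    by_cases hfv : MvPolynomial.eval v f ≠ 0
    · exact ⟨f, d, hd, hf, fun w hw => by
        rcases Finset.mem_insert.mp hw with rfl | hw
        exacts [hfv, hval w hw]⟩
    push_neg at hfv
    have hv0 : v ≠ 0 := hnz v (Finset.mem_insert_self v T)
    have key : ∀ w ∈ T, ∃ c : (Fin n → κ) →ₗ[κ] κ, c w = 0 ∧ c v ≠ 0 := by
      intro w hw
      apply exists_functional
      intro hvspan
      obtain ⟨a, rfl⟩ := Submodule.mem_span_singleton.mp hvspan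
      have heq := eval_smul_homog hf a w
      rw [hfv] at heq
      have ha : a ≠ 0 := fun h => hv0 (by rw [h, zero_smul])
      exact hval w hw (by
        have := heq.symm
        rcases mul_eq_zero.mp this with h | h
        · exact absurd h (pow_ne_zero _ ha)
        · exact h)
    choose c hc0 hcv using key
    obtain ⟨i, hi⟩ : ∃ i, v i ≠ 0 := by
      by_contra h; push_neg at h; exact hv0 (funext h)
    set m := T.card with hm
    set e := m + 1 with he
    have hmle : m ≤ e * d := by
      calc m ≤ (m + 1) * 1 := by omega
      _ ≤ (m + 1) * d := Nat.mul_le_mul_left _ hd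
    refine ⟨f ^ e + (∏ w ∈ T.attach, linForm (c w.1 w.2)) * (X i) ^ (e * d - m),
      e * d, le_trans hd (Nat.le_mul_of_pos_left d (by omega)), ?_, ?_⟩
    · apply IsHomogeneous.add
      · have := hf.pow e
        rwa [mul_comm] at this
      · have h1 : (∏ w ∈ T.attach, linForm (c w.1 w.2)).IsHomogeneous m := by
          have := IsHomogeneous.prod T.attach (fun w => linForm (c w.1 w.2)) (fun _ => 1)
            (fun w _ => linForm_homog _)
          simpa [hm] using this
        have h2 := (h1.mul (isHomogeneous_X_pow i (e * d - m)))
        rwa [Nat.add_sub_cancel' hmle] at h2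
    · intro w hw
      rcases Finset.mem_insert.mp hw with rfl | hw
      · -- at v
        rw [map_add, map_mul, map_pow, map_pow, hfv]
        rw [zero_pow (by omega)]
        rw [zero_add, map_prod]
        apply mul_ne_zero
        · rw [Finset.prod_ne_zero_iff]
          intro a _
          rw [eval_linForm]
          exact hcv a.1 a.2
        · exact pow_ne_zero _ (by simpa using hi)
      · -- at w ∈ T
        rw [map_add, map_mul, map_pow, map_prod]
        have : ∏ x ∈ T.attach, MvPolynomial.eval w (linForm (c x.1 x.2)) = 0 := by
          apply Finset.prod_eq_zero (Finset.mem_attach T ⟨w, hw⟩)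
          rw [eval_linForm]; exact hc0 w hw
        rw [this, zero_mul, add_zero]
        exact pow_ne_zero _ (hval w hw)

/-- Every Artinian commutative ring has enough homogeneous polynomials. -/
theorem artinian_hasEnoughHomogeneousPolynomials
    (R : Type*) [CommRing R] [IsArtinianRing R] :
    HasEnoughHomogeneousPolynomials R := by
  classical
  intro n hn S hS
  have hfin : {I : Ideal R | I.IsMaximal}.Finite := IsArtinianRing.setOfPred_isMaximal_finite R
  set ms : Finset (Ideal R) := hfin.toFinset with hmsdef
  have hmem : ∀ I : Ideal R, I ∈ ms ↔ I.IsMaximal := by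
    intro I; simp [hmsdef, Set.Finite.mem_toFinset]
  have step : ∀ I : Ideal R, I.IsMaximal →
      ∃ (g : MvPolynomial (Fin n) (R ⧸ I)) (d : ℕ), 1 ≤ d ∧ g.IsHomogeneous d ∧
        ∀ Q ∈ S, MvPolynomial.eval (fun i => Ideal.Quotient.mk I (Q i)) g ≠ 0 := by
    intro I hI
    haveI := hI
    letI : Field (R ⧸ I) := Ideal.Quotient.field I
    obtain ⟨g, d, h1, h2, h3⟩ := field_step (κ := R ⧸ I) hn
      (S.image fun Q => fun i => Ideal.Quotient.mk I (Q i)) (by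
        intro v hv
        obtain ⟨Q, hQ, rfl⟩ := Finset.mem_image.mp hv
        intro h0
        have hle : Ideal.span (Set.range Q) ≤ I := Ideal.span_le.mpr (by
          rintro x ⟨i, rfl⟩
          have : Ideal.Quotient.mk I (Q i) = 0 := congrFun h0 i
          exact Ideal.Quotient.eq_zero_iff_mem.mp this)
        rw [hS Q hQ] at hle
        exact hI.ne_top (top_le_iff.mp hle))
    exact ⟨g, d, h1, h2, fun Q hQ => h3 _ (Finset.mem_image_of_mem _ hQ)⟩
  choose g dd hd hgh hgv using step
  set D : ℕ := ∏ I ∈ ms.attach, dd I.1 ((hmem I.1).mp I.2) with hD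
  have hD1 : 1 ≤ D := Finset.one_le_prod' fun I _ => hd I.1 _
  have hdvd : ∀ I : {x // x ∈ ms}, dd I.1 ((hmem I.1).mp I.2) ∣ D :=
    fun I => Finset.dvd_prod_of_mem _ (Finset.mem_attach _ I)
  -- powered polynomials of common degree D
  set G : ∀ I : {x // x ∈ ms}, MvPolynomial (Fin n) (R ⧸ I.1) :=
    fun I => (g I.1 ((hmem I.1).mp I.2)) ^ (D / dd I.1 ((hmem I.1).mp I.2)) with hG
  have hGh : ∀ I, (G I).IsHomogeneous D := by
    intro I
    have := (hgh I.1 ((hmem I.1).mp I.2)).pow (D / dd I.1 ((hmem I.1).mp I.2))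
    rwa [Nat.mul_div_cancel' (hdvd I)] at this
  have hGv : ∀ I, ∀ Q ∈ S,
      MvPolynomial.eval (fun i => Ideal.Quotient.mk I.1 (Q i)) (G I) ≠ 0 := by
    intro I Q hQ
    haveI : (I.1 : Ideal R).IsPrime := Ideal.IsMaximal.isPrime ((hmem I.1).mp I.2)
    rw [hG, map_pow]
    exact pow_ne_zero _ (hgv I.1 ((hmem I.1).mp I.2) Q hQ)
  -- CRT lifting of coefficients
  have hpair : Pairwise fun (i j : {x // x ∈ ms}) => IsCoprime (i.1 : Ideal R) j.1 := by
    intro i j hij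
    exact (Ideal.isCoprime_iff_sup_eq).mpr (Ideal.IsMaximal.coprime_of_ne ((hmem i.1).mp i.2)
      ((hmem j.1).mp j.2) (fun h => hij (Subtype.ext h)))
  have crt : ∀ x : (I : {x // x ∈ ms}) → R ⧸ I.1, ∃ r : R, ∀ I, Ideal.Quotient.mk I.1 r = x I :=
    fun x => Ideal.pi_quotient_surjective hpair x
  have crt' : ∀ k : Fin n →₀ ℕ, ∃ r : R, ∀ I, Ideal.Quotient.mk I.1 r = coeff k (G I) :=
    fun k => crt (fun I => coeff k (G I))
  choose r hr using crt'
  set K : Finset (Fin n →₀ ℕ) := ms.attach.biUnion (fun I => (G I).support) with hK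
  set f : MvPolynomial (Fin n) R := ∑ k ∈ K, monomial k (r k) with hf
  have hdegK : ∀ k ∈ K, k.degree = D := by
    intro k hk
    obtain ⟨I, _, hkI⟩ := Finset.mem_biUnion.mp hk
    have := hGh I (mem_support_iff.mp hkI)
    rw [Finsupp.degree_eq_weight_one]
    exact this
  have hfh : f.IsHomogeneous D := by
    rw [hf]
    exact IsHomogeneous.sum _ _ _ fun k hk => isHomogeneous_monomial _ (hdegK k hk)
  have hmap : ∀ I : {x // x ∈ ms}, MvPolynomial.map (Ideal.Quotient.mk I.1) f = G I := by
    intro I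
    rw [hf, map_sum]
    simp_rw [map_monomial]
    have hsub : (G I).support ⊆ K := fun k hk =>
      Finset.mem_biUnion.mpr ⟨I, Finset.mem_attach _ _, hk⟩
    rw [Finset.sum_congr rfl (fun k _ => by rw [hr k I])]
    rw [← Finset.sum_subset hsub (fun k _ hk => by
      rw [notMem_support_iff.mp hk, monomial_zero])]
    exact support_sum_monomial_coeff (G I)
  refine ⟨f, D, hD1, hfh, ?_⟩
  intro Q hQ
  by_contra hu
  obtain ⟨I, hImax, hmemI⟩ := exists_max_ideal_of_mem_nonunits hu
  have hIms : (⟨I, (hmem I).mpr hImax⟩ : {x // x ∈ ms}) = ⟨I, (hmem I).mpr hImax⟩ := rfl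
  set Isub : {x // x ∈ ms} := ⟨I, (hmem I).mpr hImax⟩
  have h0 : Ideal.Quotient.mk I (MvPolynomial.eval Q f) = 0 :=
    Ideal.Quotient.eq_zero_iff_mem.mpr hmemI
  have hcomm : Ideal.Quotient.mk I (MvPolynomial.eval Q f)
      = MvPolynomial.eval (fun i => Ideal.Quotient.mk I (Q i))
        (MvPolynomial.map (Ideal.Quotient.mk I) f) := by
    rw [eval_map]
    have := eval₂_comp_left (Ideal.Quotient.mk I) (RingHom.id R) Q f
    simpa [eval₂_eta, Function.comp_def] using this
  rw [hcomm, hmap Isub] at h0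
  exact hGv Isub Q hQ h0
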